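/- Let n ≥ 3, let a_1, …, a_n be positive reals, let p = (x_1, …, x_n) satisfy ∑_{i=1}^n x_i²/a_i² = 1 and x_n ≠ 0, and let λ ∈ ℝ. Then the following are equivalent: (i) every u ∈ ℝ^n with ∑_{i=1}^n a_i^{-2} x_i u_i = 0 satisfies ∑_{i=1}^n a_i^{-2} u_i² = λ ∑_{i=1}^n u_i²; (ii) for every 1 ≤ α ≤ n−1 one has a_α^{-2} + a_n² x_n^{-2} x_α² a_α^{-4} = λ (1 + a_n^4 x_n^{-2} x_α² a_α^{-4}), and (1 − λ a_n²) x_α x_β = 0 for all 1 ≤ α ≠ β ≤ n−1. -/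

import Mathlib

open Finset

set_option maxHeartbeats 1000000 in
theorem umbilic_aux (n : ℕ) (a x : Fin n → ℝ) (N : Fin n)
    (ha : ∀ i, 0 < a i) (hxN : x N ≠ 0) (lam : ℝ) :
    (∀ u : Fin n → ℝ, (∑ i, x i * u i / a i ^ 2 = 0) →
        ∑ i, u i ^ 2 / a i ^ 2 = lam * ∑ i, u i ^ 2) ↔
      ((∀ α : Fin n, α ≠ N →
          1 / a α ^ 2 + a N ^ 2 / x N ^ 2 * x α ^ 2 / a α ^ 4
            = lam * (1 + a N ^ 4 / x N ^ 2 * x α ^ 2 / a α ^ 4)) ∧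
        (∀ α β : Fin n, α ≠ N → β ≠ N → α ≠ β →
          (1 - lam * a N ^ 2) * x α * x β = 0)) := by
  have ha' : ∀ i, a i ≠ 0 := fun i => (ha i).ne'
  have haN2 : a N ^ 2 ≠ 0 := pow_ne_zero _ (ha' N)
  have hxN2 : x N ^ 2 ≠ 0 := pow_ne_zero _ hxN
  have hcan : 1 / a N ^ 2 * a N ^ 4 = a N ^ 2 := by
    field_simp
  constructor
  · intro h
    have pair : ∀ (α : Fin n), α ≠ N → ∀ F : Fin n → ℝ,
        (∀ i, i ≠ α → i ≠ N → F i = 0) → ∑ i, F i = F α + F N := by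
      intro α hα F hF
      rw [← Finset.sum_subset (Finset.subset_univ {α, N})
        (fun i _ hi => by
          simp only [Finset.mem_insert, Finset.mem_singleton, not_or] at hi
          exact hF i hi.1 hi.2)]
      exact Finset.sum_pair hα
    have key : ∀ α : Fin n, α ≠ N →
        1 / a α ^ 2 + a N ^ 2 / x N ^ 2 * x α ^ 2 / a α ^ 4
          = lam * (1 + a N ^ 4 / x N ^ 2 * x α ^ 2 / a α ^ 4) := by
      intro α hα
      set c : ℝ := -(a N ^ 2 / x N) * (x α / a α ^ 2) with hc
      set u : Fin n → ℝ := fun i => if i = α then 1 else if i = N then c else 0 with hu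
      have huα : u α = 1 := by simp [hu]
      have huN : u N = c := by simp [hu, Ne.symm hα]
      have hcon : ∑ i, x i * u i / a i ^ 2 = 0 := by
        rw [pair α hα _ (fun i h1 h2 => by simp [hu, h1, h2])]
        rw [huα, huN, hc]
        field_simp [hxN, ha' α, ha' N]
        ring
      have E := h u hcon
      rw [pair α hα (fun i => u i ^ 2 / a i ^ 2) (fun i h1 h2 => by simp [hu, h1, h2]),
          pair α hα (fun i => u i ^ 2) (fun i h1 h2 => by simp [hu, h1, h2])] at E
      rw [huα, huN] at E
      have hcc : c ^ 2 / a N ^ 2 = a N ^ 2 / x N ^ 2 * x α ^ 2 / a α ^ 4 := by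
        rw [hc]; field_simp [hxN, ha' α, ha' N]
      have hc2 : c ^ 2 = a N ^ 4 / x N ^ 2 * x α ^ 2 / a α ^ 4 := by
        rw [hc]; field_simp [hxN, ha' α, ha' N]
      rw [hcc, hc2] at E
      linear_combination E
    refine ⟨key, ?_⟩
    intro α β hα hβ hαβ
    have triple : ∀ F : Fin n → ℝ, (∀ i, i ≠ α → i ≠ β → i ≠ N → F i = 0) →
        ∑ i, F i = F α + (F β + F N) := by
      intro F hF
      rw [← Finset.sum_subset (Finset.subset_univ {α, β, N})
        (fun i _ hi => by
          simp only [Finset.mem_insert, Finset.mem_singleton, not_or] at hi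
          exact hF i hi.1 hi.2.1 hi.2.2)]
      rw [Finset.sum_insert (by simp [hαβ, hα]), Finset.sum_pair hβ]
    set c : ℝ := -(a N ^ 2 / x N) * (x α / a α ^ 2 + x β / a β ^ 2) with hc
    set u : Fin n → ℝ := fun i => if i = α then 1 else if i = β then 1
      else if i = N then c else 0 with hu
    have huα : u α = 1 := by simp [hu]
    have huβ : u β = 1 := by simp [hu, Ne.symm hαβ]
    have huN : u N = c := by simp [hu, Ne.symm hα, Ne.symm hβ]
    have hcon : ∑ i, x i * u i / a i ^ 2 = 0 := by
      rw [triple _ (fun i h1 h2 h3 => by simp [hu, h1, h2, h3])]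
      rw [huα, huβ, huN]
      have hNterm : x N * c / a N ^ 2 = -(x α * 1 / a α ^ 2) - x β * 1 / a β ^ 2 := by
        rw [hc]; field_simp [hxN, ha' α, ha' β, ha' N]; ring
      linarith [hNterm]
    have E := h u hcon
    rw [triple (fun i => u i ^ 2 / a i ^ 2) (fun i h1 h2 h3 => by simp [hu, h1, h2, h3]),
        triple (fun i => u i ^ 2) (fun i h1 h2 h3 => by simp [hu, h1, h2, h3])] at E
    rw [huα, huβ, huN] at E
    have hcc : c ^ 2 / a N ^ 2 = a N ^ 2 / x N ^ 2 * (x α / a α ^ 2 + x β / a β ^ 2) ^ 2 := by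
      rw [hc]; field_simp [hxN, ha' α, ha' β, ha' N]
    have hc2 : c ^ 2 = a N ^ 4 / x N ^ 2 * (x α / a α ^ 2 + x β / a β ^ 2) ^ 2 := by
      rw [hc]; field_simp [hxN, ha' α, ha' β, ha' N]
    rw [hcc, hc2] at E
    have E1 := key α hα
    have E2 := key β hβ
    have F : (1 - lam * a N ^ 2) * x α * x β *
        (2 * a N ^ 2 / (x N ^ 2 * a α ^ 2 * a β ^ 2)) = 0 := by
      linear_combination E - E1 - E2
    have hne : (2 * a N ^ 2 / (x N ^ 2 * a α ^ 2 * a β ^ 2)) ≠ 0 :=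
      div_ne_zero (by positivity)
        (mul_ne_zero (mul_ne_zero hxN2 (pow_ne_zero _ (ha' α))) (pow_ne_zero _ (ha' β)))
    exact (mul_eq_zero.mp F).resolve_right hne
  · rintro ⟨h1, h2⟩ u hu
    have h1' : ∀ α : Fin n, α ≠ N →
        1 / a α ^ 2 - lam + (1 / a N ^ 2 - lam) * (a N ^ 4 / x N ^ 2) * x α ^ 2 / a α ^ 4
          = 0 := by
      intro α hA
      linear_combination h1 α hA + (x α ^ 2 / (x N ^ 2 * a α ^ 4)) * hcan
    have h2' : ∀ α β : Fin n, α ≠ N → β ≠ N → α ≠ β →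
        (1 / a N ^ 2 - lam) * x α * x β = 0 := by
      intro α β hA hB hAB
      have h := h2 α β hA hB hAB
      linear_combination (1 / a N ^ 2) * h + lam * x α * x β * mul_one_div_cancel haN2
    set s : Finset (Fin n) := Finset.univ.erase N with hs
    have hsplit : ∀ F : Fin n → ℝ, ∑ i, F i = (∑ i ∈ s, F i) + F N := by
      intro F
      rw [hs]
      exact (Finset.sum_erase_add Finset.univ F (Finset.mem_univ N)).symm
    rw [hsplit] at hu
    set S : ℝ := ∑ α ∈ s, x α * u α / a α ^ 2 with hSdef
    have h' : x N * u N = -(S * a N ^ 2) := by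
      field_simp [ha' N] at hu
      linarith
    have huN : u N = -(a N ^ 2 / x N) * S := by
      field_simp [hxN]
      linear_combination h'
    have hdiag : ∑ α ∈ s, ((1 / a N ^ 2 - lam) * (a N ^ 4 / x N ^ 2) *
          ((x α * u α / a α ^ 2) * S)) =
        ∑ α ∈ s, ((1 / a N ^ 2 - lam) * (a N ^ 4 / x N ^ 2) *
          (x α * u α / a α ^ 2) ^ 2) := by
      refine Finset.sum_congr rfl fun α hαs => ?_
      have hαN : α ≠ N := (Finset.mem_erase.mp hαs).1
      have hsplitα : S = (∑ β ∈ s.erase α, x β * u β / a β ^ 2) + x α * u α / a α ^ 2 := by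
        rw [hSdef]
        exact (Finset.sum_erase_add s _ hαs).symm
      have hz : ∑ β ∈ s.erase α, ((1 / a N ^ 2 - lam) * (a N ^ 4 / x N ^ 2) *
          ((x α * u α / a α ^ 2) * (x β * u β / a β ^ 2))) = 0 := by
        refine Finset.sum_eq_zero fun β hβ => ?_
        have hβα : β ≠ α := (Finset.mem_erase.mp hβ).1
        have hβN : β ≠ N := (Finset.mem_erase.mp ((Finset.mem_erase.mp hβ).2)).1
        linear_combination (a N ^ 4 * u α * u β / (x N ^ 2 * a α ^ 2 * a β ^ 2)) *
          h2' α β hαN hβN hβα.symm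
      have hz' : (1 / a N ^ 2 - lam) * (a N ^ 4 / x N ^ 2) *
          ((x α * u α / a α ^ 2) * ∑ β ∈ s.erase α, x β * u β / a β ^ 2) = 0 := by
        rw [Finset.mul_sum, Finset.mul_sum]
        exact hz
      linear_combination hz' + ((1 / a N ^ 2 - lam) * (a N ^ 4 / x N ^ 2) *
        (x α * u α / a α ^ 2)) * hsplitα
    have hKey : (1 / a N ^ 2 - lam) * u N ^ 2 =
        ∑ α ∈ s, ((1 / a N ^ 2 - lam) * (a N ^ 4 / x N ^ 2) *
          (x α * u α / a α ^ 2) ^ 2) := by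
      rw [← hdiag]
      calc (1 / a N ^ 2 - lam) * u N ^ 2
          = ((1 / a N ^ 2 - lam) * (a N ^ 4 / x N ^ 2) * S) * S := by
            rw [huN]; ring
        _ = ∑ α ∈ s, (((1 / a N ^ 2 - lam) * (a N ^ 4 / x N ^ 2) * S) *
              (x α * u α / a α ^ 2)) := by
            rw [← Finset.mul_sum, ← hSdef]
        _ = _ := Finset.sum_congr rfl fun α _ => by ring
    have hzero : (∑ α ∈ s, u α ^ 2 / a α ^ 2) - lam * (∑ α ∈ s, u α ^ 2) +
        (∑ α ∈ s, ((1 / a N ^ 2 - lam) * (a N ^ 4 / x N ^ 2) *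
          (x α * u α / a α ^ 2) ^ 2)) = 0 := by
      rw [Finset.mul_sum, ← Finset.sum_sub_distrib, ← Finset.sum_add_distrib]
      refine Finset.sum_eq_zero fun α hαs => ?_
      have hαN : α ≠ N := (Finset.mem_erase.mp hαs).1
      linear_combination u α ^ 2 * h1' α hαN
    rw [hsplit (fun i => u i ^ 2 / a i ^ 2), hsplit (fun i => u i ^ 2)]
    linear_combination hzero + hKey

/-- **Umbilic criterion on an ellipsoid, componentwise form.**
Let `n ≥ 3`, let `a₁, …, aₙ` be positive reals, let `p = (x₁, …, xₙ)` satisfy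
`∑ xᵢ²/aᵢ² = 1` with `xₙ ≠ 0`, and let `λ ∈ ℝ`.  Then the proportionality condition
(i) on tangent vectors is equivalent to the system (ii) of scalar equations. -/
theorem stmt_0 (n : ℕ) (hn : 3 ≤ n) (a x : Fin n → ℝ)
    (ha : ∀ i, 0 < a i)
    (hx : ∑ i, x i ^ 2 / a i ^ 2 = 1)
    (hxn : x ⟨n - 1, by omega⟩ ≠ 0) (lam : ℝ) :
    (∀ u : Fin n → ℝ, (∑ i, x i * u i / a i ^ 2 = 0) →
        ∑ i, u i ^ 2 / a i ^ 2 = lam * ∑ i, u i ^ 2) ↔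
      ((∀ α : Fin n, α ≠ ⟨n - 1, by omega⟩ →
          1 / a α ^ 2 +
              a ⟨n - 1, by omega⟩ ^ 2 / x ⟨n - 1, by omega⟩ ^ 2 * x α ^ 2 / a α ^ 4
            = lam * (1 + a ⟨n - 1, by omega⟩ ^ 4 / x ⟨n - 1, by omega⟩ ^ 2
                * x α ^ 2 / a α ^ 4)) ∧
        (∀ α β : Fin n, α ≠ ⟨n - 1, by omega⟩ → β ≠ ⟨n - 1, by omega⟩ → α ≠ β →
          (1 - lam * a ⟨n - 1, by omega⟩ ^ 2) * x α * x β = 0)) :=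
  umbilic_aux n a x ⟨n - 1, by omega⟩ ha hxn lam
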